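/- Let p be a prime, B a group, and A a normal subgroup of B isomorphic to ℤ². Then for every homomorphism f from B to a finite p-group there exists N ≥ 1 such that f(Γ^N A) = 1. In particular ⋂_{k≥1} Γ^kA is contained in every normal subgroup of p-power index in B. -/

import Mathlib

/-- The subgroup of `m`-th powers (written additively: `m`-th multiples) of elements of `A`. -/
def powSubgroup {B : Type*} [Group B] (A : Subgroup B) (m : ℕ) : Subgroup B :=
  Subgroup.closure {x : B | ∃ a ∈ A, x = a ^ m}

/-- `gammaSeries p A k` is the subgroup `Γ^{k+1}A` of the paper: `Γ¹A = [B,A]·(pA)` and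
`Γ^{k+1}A = [B,Γ^kA]·(p^{k+1}A)`. (Indices are shifted: `gammaSeries p A k = Γ^{k+1}A`.) -/
def gammaSeries {B : Type*} [Group B] (p : ℕ) (A : Subgroup B) : ℕ → Subgroup B
  | 0 => ⁅(⊤ : Subgroup B), A⁆ ⊔ powSubgroup A p
  | k + 1 => ⁅(⊤ : Subgroup B), gammaSeries p A k⁆ ⊔ powSubgroup A (p ^ (k + 2))

/-- The image of `powSubgroup A m` is trivial as soon as `m`-th powers in the target vanish. -/
theorem map_powSubgroup_le_bot {B P : Type*} [Group B] [Group P] (A : Subgroup B) (m : ℕ)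
    (f : B →* P) (hm : ∀ x : P, x ^ m = 1) :
    Subgroup.map f (powSubgroup A m) ≤ ⊥ := by
  rw [Subgroup.map_le_iff_le_comap, powSubgroup, Subgroup.closure_le]
  rintro x ⟨a, -, rfl⟩
  simp [Subgroup.mem_comap, hm (f a)]

/-- Key auxiliary lemma: any homomorphism to a finite `p`-group kills some `gammaSeries` term. -/
theorem gamma_aux {B : Type*} [Group B] (p : ℕ) (hp : p.Prime) (A : Subgroup B)
    {P : Type*} [Group P] [Finite P] (hP : IsPGroup p P) (f : B →* P) :
    ∃ N : ℕ, ∀ a ∈ gammaSeries p A N, f a = 1 := by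
  haveI : Fact p.Prime := ⟨hp⟩
  obtain ⟨n, hn⟩ := IsPGroup.iff_card.mp hP
  have hpow : ∀ (m : ℕ), n ≤ m → ∀ x : P, x ^ p ^ m = 1 := by
    intro m hm x
    have h1 : x ^ Nat.card P = 1 := orderOf_dvd_iff_pow_eq_one.mp (orderOf_dvd_natCard x)
    have : p ^ n ∣ p ^ m := pow_dvd_pow p hm
    obtain ⟨c, hc⟩ := this
    rw [hc, pow_mul, ← hn, h1, one_pow]
  haveI : Group.IsNilpotent P := hP.isNilpotent
  obtain ⟨c, hc⟩ := nilpotent_iff_lowerCentralSeries.mp this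
  -- main induction: f(Γ^{n+j}) ≤ Subgroup.lowerCentralSeries (⊤ : Subgroup P) j
  have key : ∀ j : ℕ, Subgroup.map f (gammaSeries p A (n + j)) ≤ Subgroup.lowerCentralSeries (⊤ : Subgroup P) j := by
    intro j
    induction j with
    | zero => simp [lowerCentralSeries]
    | succ j ih =>
      have hnj : n + (j + 1) = (n + j) + 1 := by omega
      rw [hnj]
      show Subgroup.map f (⁅(⊤ : Subgroup B), gammaSeries p A (n + j)⁆
          ⊔ powSubgroup A (p ^ (n + j + 2))) ≤ _
      rw [Subgroup.map_sup, Subgroup.map_commutator]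
      apply sup_le
      · calc ⁅Subgroup.map f ⊤, Subgroup.map f (gammaSeries p A (n + j))⁆
            ≤ ⁅(⊤ : Subgroup P), Subgroup.lowerCentralSeries (⊤ : Subgroup P) j⁆ :=
              Subgroup.commutator_mono le_top ih
          _ = ⁅Subgroup.lowerCentralSeries (⊤ : Subgroup P) j, (⊤ : Subgroup P)⁆ := Subgroup.commutator_comm _ _
          _ = Subgroup.lowerCentralSeries (⊤ : Subgroup P) (j + 1) := rfl
      · exact le_trans (map_powSubgroup_le_bot A _ f (hpow _ (by omega))) bot_le
  refine ⟨n + c, fun a ha => ?_⟩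
  have : f a ∈ Subgroup.lowerCentralSeries (⊤ : Subgroup P) c := key c ⟨a, ha, rfl⟩
  rw [hc] at this
  exact this

/-- Let `p` be a prime, `B` a group, and `A` a normal subgroup of `B`
isomorphic to `ℤ²`.  Then for every homomorphism `f` from `B` to a finite `p`-group
there is an `N ≥ 1` with `f(Γ^N A) = 1`; in particular `⋂_{k ≥ 1} Γ^kA` is contained in
every normal subgroup of `p`-power index in `B`. -/
theorem stmt_7 (p : ℕ) (hp : p.Prime) (B : Type*) [Group B] (A : Subgroup B)
    (hA : A.Normal) (e : A ≃* Multiplicative (ℤ × ℤ)) :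
    (∀ (P : Type) [Group P] [Finite P], IsPGroup p P → ∀ f : B →* P,
      ∃ N : ℕ, ∀ a ∈ gammaSeries p A N, f a = 1) ∧
      ∀ N : Subgroup B, N.Normal → (∃ n : ℕ, N.index = p ^ n) →
        (⨅ k : ℕ, gammaSeries p A k) ≤ N := by
  constructor
  · intro P _ _ hP f
    exact gamma_aux p hp A hP f
  · rintro N hN ⟨n, hn⟩
    haveI := hN
    have hcard : Nat.card (B ⧸ N) = p ^ n := by
      rw [← hn]; rfl
    haveI : Finite (B ⧸ N) := Nat.finite_of_card_ne_zero (by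
      rw [hcard]; exact pow_ne_zero n hp.pos.ne')
    have hP : IsPGroup p (B ⧸ N) := IsPGroup.of_card hcard
    obtain ⟨M, hM⟩ := gamma_aux p hp A hP (QuotientGroup.mk' N)
    refine le_trans (iInf_le _ M) ?_
    intro a ha
    exact (QuotientGroup.eq_one_iff a).mp (hM a ha)
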